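/- Let 0 < b < ∞ and 0 ≤ c < π/2, and let u, v, θ : [0,b) → ℝ be differentiable functions satisfying u'(s) = cos θ(s), v'(s) = sin θ(s), θ'(s) = sin θ(s) · tan u(s) + cos θ(s), and |u(s)| ≤ c for all s ∈ [0,b). Then u, v and θ extend continuously to [0,b], i.e. the limits lim_{s→b⁻} u(s), lim_{s→b⁻} v(s) and lim_{s→b⁻} θ(s) exist and are finite. -/

import Mathlib

open Real Filter

/-- A real function Lipschitz on `Ico 0 b` with `0 < b` has a finite limit at `b` from within. -/
lemma limit_of_lipschitzOn {b : ℝ} (hb : 0 < b) {f : ℝ → ℝ} {K : NNReal}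
    (hf : LipschitzOnWith K f (Set.Ico 0 b)) :
    ∃ L : ℝ, Tendsto f (nhdsWithin b (Set.Ico 0 b)) (nhds L) := by
  obtain ⟨g, hg, heq⟩ := hf.extend_real
  refine ⟨g b, ?_⟩
  have : Tendsto g (nhdsWithin b (Set.Ico 0 b)) (nhds (g b)) :=
    (hg.continuous.tendsto b).mono_left nhdsWithin_le_nhds
  exact this.congr' (by filter_upwards [self_mem_nhdsWithin] with x hx using (heq hx).symm)

theorem rotational_V_soliton_extension (b c : ℝ) (u v θ : ℝ → ℝ)
    (hb : 0 < b) (hc0 : 0 ≤ c) (hc : c < π / 2)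
    (hu : ∀ s ∈ Set.Ico (0 : ℝ) b, HasDerivWithinAt u (cos (θ s)) (Set.Ico 0 b) s)
    (hv : ∀ s ∈ Set.Ico (0 : ℝ) b, HasDerivWithinAt v (sin (θ s)) (Set.Ico 0 b) s)
    (hθ : ∀ s ∈ Set.Ico (0 : ℝ) b,
      HasDerivWithinAt θ (sin (θ s) * tan (u s) + cos (θ s)) (Set.Ico 0 b) s)
    (hbound : ∀ s ∈ Set.Ico (0 : ℝ) b, |u s| ≤ c) :
    (∃ L₁ : ℝ, Tendsto u (nhdsWithin b (Set.Ico 0 b)) (nhds L₁)) ∧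
    (∃ L₂ : ℝ, Tendsto v (nhdsWithin b (Set.Ico 0 b)) (nhds L₂)) ∧
    (∃ L₃ : ℝ, Tendsto θ (nhdsWithin b (Set.Ico 0 b)) (nhds L₃)) := by
  have hconv : Convex ℝ (Set.Ico (0 : ℝ) b) := convex_Ico 0 b
  have hcpos : 0 ≤ tan c := Real.tan_nonneg_of_nonneg_of_le_pi_div_two hc0 (le_of_lt hc)
  refine ⟨limit_of_lipschitzOn hb (hconv.lipschitzOnWith_of_nnnorm_hasDerivWithin_le
      (C := 1) hu fun x hx => ?_),
    limit_of_lipschitzOn hb (hconv.lipschitzOnWith_of_nnnorm_hasDerivWithin_le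
      (C := 1) hv fun x hx => ?_),
    limit_of_lipschitzOn hb (hconv.lipschitzOnWith_of_nnnorm_hasDerivWithin_le
      (C := Real.toNNReal (tan c + 1)) hθ fun x hx => ?_)⟩
  · rw [← NNReal.coe_le_coe, coe_nnnorm]
    simpa using Real.abs_cos_le_one (θ x)
  · rw [← NNReal.coe_le_coe, coe_nnnorm]
    simpa using Real.abs_sin_le_one (θ x)
  · rw [← NNReal.coe_le_coe, coe_nnnorm, Real.coe_toNNReal _ (by positivity)]
    have h1 : |u x| ≤ c := hbound x hx
    have hlt : |u x| < π / 2 := lt_of_le_of_lt h1 hc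
    have h2 : -(π/2) < u x ∧ u x < π/2 := abs_lt.mp hlt
    have habs : tan |u x| ≤ tan c :=
      Real.strictMonoOn_tan.monotoneOn ⟨by linarith [abs_nonneg (u x), pi_div_two_pos], hlt⟩
        ⟨by linarith [pi_div_two_pos], hc⟩ h1
    have key : |tan (u x)| = tan |u x| := by
      rcases le_or_gt 0 (u x) with h | h
      · rw [abs_of_nonneg h, abs_of_nonneg
          (Real.tan_nonneg_of_nonneg_of_le_pi_div_two h (le_of_lt h2.2))]
      · rw [abs_of_neg h, abs_of_neg
          (Real.tan_neg_of_neg_of_pi_div_two_lt h h2.1), ← Real.tan_neg]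
    have htan : |tan (u x)| ≤ tan c := key ▸ habs
    show ‖sin (θ x) * tan (u x) + cos (θ x)‖ ≤ tan c + 1
    calc ‖sin (θ x) * tan (u x) + cos (θ x)‖
        ≤ ‖sin (θ x) * tan (u x)‖ + ‖cos (θ x)‖ := norm_add_le _ _
      _ ≤ |tan (u x)| + 1 := by
          rw [Real.norm_eq_abs, Real.norm_eq_abs, abs_mul]
          have := Real.abs_sin_le_one (θ x)
          have := Real.abs_cos_le_one (θ x)
          nlinarith [abs_nonneg (tan (u x))]
      _ ≤ tan c + 1 := by linarith
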